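/- Kildall's worklist algorithm terminates for any monotone flow function when the semilattice of abstract states has finite height: since the abstract-state semilattice Map = Var → Abst (Var finite) has finite height and results only increase under join, the worklist eventually empties. -/

import Mathlib

theorem kildall_terminates
    {Vert Var A : Type} [Fintype Vert] [DecidableEq Vert]
    [Fintype Var] [DecidableEq A] [Fintype A] [SemilatticeSup A]
    (succ : Vert → Finset Vert)
    (flow : Vert → (Var → A) → (Var → A))
    (hmono : ∀ v : Vert, Monotone (flow v)) :
    ¬ ∃ f : ℕ → (Vert → Var → A) × Finset Vert,
        ∀ n : ℕ, ∃ v ∈ (f n).2,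
          (f (n + 1)).1 = (fun u =>
            if u ∈ succ v ∧ flow v ((f n).1 v) ⊔ (f n).1 u ≠ (f n).1 u
            then (f n).1 u ⊔ flow v ((f n).1 v) else (f n).1 u) ∧
          (f (n + 1)).2 = ((f n).2.erase v) ∪
            (succ v).filter (fun u => flow v ((f n).1 v) ⊔ (f n).1 u ≠ (f n).1 u) := by
  rintro ⟨f, hf⟩
  -- the abstract state map is monotone in the step index
  have hmonoπ : Monotone (fun n => (f n).1) := by
    apply monotone_nat_of_le_succ
    intro n
    obtain ⟨v, hv, hπ, hW⟩ := hf n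
    rw [hπ]
    intro u x
    dsimp only
    split
    · exact le_sup_left
    · exact le_rfl
  -- eventually constant since the poset is finite
  have hwf : WellFounded ((· > ·) : (Vert → Var → A) → _ → Prop) :=
    Finite.to_wellFoundedGT.wf
  obtain ⟨N, hN⟩ := wellFoundedGT_iff_monotone_chain_condition.mp ⟨hwf⟩ ⟨_, hmonoπ⟩
  -- after N, π is constant, hence each step's filter is empty
  have hstep : ∀ n, N ≤ n → (f (n + 1)).2.card < (f n).2.card := by
    intro n hn
    obtain ⟨v, hv, hπ, hW⟩ := hf n
    have hπeq : (f (n + 1)).1 = (f n).1 := by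
      have h1 := hN (n + 1) (hn.trans (Nat.le_succ n))
      have h2 := hN n hn
      simp only [OrderHom.coe_mk] at h1 h2
      rw [← h1, ← h2]
    have hfilt : (succ v).filter
        (fun u => flow v ((f n).1 v) ⊔ (f n).1 u ≠ (f n).1 u) = ∅ := by
      rw [Finset.filter_eq_empty_iff]
      intro u hu hne
      have := congrFun hπeq u
      rw [hπ] at this
      have hcond : u ∈ succ v ∧ flow v ((f n).1 v) ⊔ (f n).1 u ≠ (f n).1 u := ⟨hu, hne⟩
      simp only at this
      rw [if_pos hcond] at this
      exact hne (by rw [sup_comm]; exact this)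
    rw [hW, hfilt, Finset.union_empty]
    exact Finset.card_erase_lt_of_mem hv
  -- strictly decreasing ℕ-sequence: contradiction
  have hle : ∀ k, (f (N + k)).2.card + k ≤ (f N).2.card := by
    intro k
    induction k with
    | zero => simp
    | succ k ih =>
      have := hstep (N + k) (Nat.le_add_right _ _)
      rw [show N + (k + 1) = N + k + 1 from rfl]
      omega
  have := hle ((f N).2.card + 1)
  omega
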